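/- Let (W, r_1, …, r_n) be a Strip Packing instance whose rectangles are listed in the FQW-ordering and consider its BL packing. If Q = ∅, or if max{y_r + h_r : r ∈ Q} ≤ h_max, then h_BL ≤ 2 · h_OPT. -/

import Mathlib

open scoped Classical
open MeasureTheory

/-- An axis-parallel rectangle, given by its width and its height. -/
structure Rect where
  w : ℝ
  h : ℝ

/-- A Strip Packing instance: a strip of width `W > 0` and `n` rectangles
`r 0, …, r (n-1)`, each with positive height and width at most `W`. -/
structure SPInstance (n : ℕ) where
  W : ℝ
  r : Fin n → Rect
  W_pos : 0 < W
  w_pos : ∀ i, 0 < (r i).w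
  w_le_W : ∀ i, (r i).w ≤ W
  h_pos : ∀ i, 0 < (r i).h

/-- The open box of rectangle `R` placed at position `p`. -/
def openBox (R : Rect) (p : ℝ × ℝ) : Set (ℝ × ℝ) :=
  Set.Ioo p.1 (p.1 + R.w) ×ˢ Set.Ioo p.2 (p.2 + R.h)

/-- The closed box of rectangle `R` placed at position `p`. -/
def closedBox (R : Rect) (p : ℝ × ℝ) : Set (ℝ × ℝ) :=
  Set.Icc p.1 (p.1 + R.w) ×ˢ Set.Icc p.2 (p.2 + R.h)

namespace SPInstance

variable {n : ℕ}

/-- Rectangle `i` placed at `p` lies inside the strip. -/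
def InStrip (I : SPInstance n) (i : Fin n) (p : ℝ × ℝ) : Prop :=
  0 ≤ p.1 ∧ p.1 + (I.r i).w ≤ I.W ∧ 0 ≤ p.2

/-- `pos` is a feasible packing: each rectangle lies in the strip and the open
boxes are pairwise disjoint. -/
def Feasible (I : SPInstance n) (pos : Fin n → ℝ × ℝ) : Prop :=
  (∀ i, I.InStrip i (pos i)) ∧
    Pairwise (fun i j : Fin n =>
      Disjoint (openBox (I.r i) (pos i)) (openBox (I.r j) (pos j)))

/-- The height of a packing, `max_i (y_i + h_i)`. -/
noncomputable def height (I : SPInstance n) (pos : Fin n → ℝ × ℝ) : ℝ :=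
  ⨆ i, ((pos i).2 + (I.r i).h)

/-- The minimum height of a feasible packing. -/
noncomputable def hOPT (I : SPInstance n) : ℝ :=
  sInf {H | ∃ pos, I.Feasible pos ∧ I.height pos = H}

/-- The maximum height of a rectangle of the instance. -/
noncomputable def hmax (I : SPInstance n) : ℝ :=
  ⨆ i, (I.r i).h

/-- Rectangle `i` can feasibly be placed at `p`, given the rectangles
`j < i` already placed at `pos j`. -/
def FeasibleAt (I : SPInstance n) (pos : Fin n → ℝ × ℝ) (i : Fin n) (p : ℝ × ℝ) : Prop :=
  I.InStrip i p ∧ ∀ j : Fin n, j < i →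
    Disjoint (openBox (I.r i) p) (openBox (I.r j) (pos j))

/-- `pos` is the Bottom-Left packing for the ordering `r 0, r 1, …`: every
rectangle is feasibly placed, at the lexicographically minimal `(y, x)`. -/
def IsBL (I : SPInstance n) (pos : Fin n → ℝ × ℝ) : Prop :=
  ∀ i : Fin n, I.FeasibleAt pos i (pos i) ∧
    ∀ p : ℝ × ℝ, I.FeasibleAt pos i p →
      (pos i).2 < p.2 ∨ ((pos i).2 = p.2 ∧ (pos i).1 ≤ p.1)

/-- Greedy construction of the set `F` of the FQW-partition, processing the
rectangles in the order `σ 0, σ 1, …` and adding a rectangle whenever the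
total width of `F` stays at most `W`. -/
noncomputable def greedyF (I : SPInstance n) (σ : Equiv.Perm (Fin n)) : Finset (Fin n) :=
  (List.finRange n).foldl
    (fun F k =>
      if (I.r (σ k)).w + ∑ f ∈ F, (I.r f).w ≤ I.W then insert (σ k) F else F) ∅

end SPInstance

/-- An FQW-partition datum: a processing order `σ` of the rectangles that is
sorted by decreasing height. -/
structure FQW {n : ℕ} (I : SPInstance n) where
  σ : Equiv.Perm (Fin n)
  sorted : ∀ k k' : Fin n, k ≤ k' → (I.r (σ k')).h ≤ (I.r (σ k)).h

namespace FQW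

variable {n : ℕ} {I : SPInstance n}

/-- The set `F` of the FQW-partition. -/
noncomputable def F (d : FQW I) : Finset (Fin n) := I.greedyF d.σ

/-- The set `𝒲` of the FQW-partition: rectangles not in `F` of width
greater than `W/2`. -/
noncomputable def Wset (d : FQW I) : Finset (Fin n) :=
  Finset.univ.filter fun i => i ∉ d.F ∧ I.W / 2 < (I.r i).w

/-- The set `Q` of the FQW-partition: all remaining rectangles. -/
noncomputable def Q (d : FQW I) : Finset (Fin n) :=
  Finset.univ.filter fun i => i ∉ d.F ∧ ¬ I.W / 2 < (I.r i).w

/-- The rectangles of the instance are listed in the FQW-ordering: first `F`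
sorted by decreasing height, then `Q` sorted by decreasing width, then `𝒲`. -/
def IsOrdered (d : FQW I) : Prop :=
  (∀ i : Fin n, i ∈ d.F ↔ (i : ℕ) < d.F.card) ∧
  (∀ i : Fin n, i ∈ d.Q ↔ d.F.card ≤ (i : ℕ) ∧ (i : ℕ) < d.F.card + d.Q.card) ∧
  (∀ i j : Fin n, (i : ℕ) ≤ (j : ℕ) → (j : ℕ) < d.F.card → (I.r j).h ≤ (I.r i).h) ∧
  (∀ i j : Fin n, d.F.card ≤ (i : ℕ) → (i : ℕ) ≤ (j : ℕ) →
    (j : ℕ) < d.F.card + d.Q.card → (I.r j).w ≤ (I.r i).w)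

end FQW

/-- `max {y_{r_1}, …, y_{r_i}}` (the first `i` rectangles, `0` if `i = 0`):
the lower boundary of the region `H_{i+1}` of the horizontal strip partition. -/
noncomputable def maxYBelow {n : ℕ} (pos : Fin n → ℝ × ℝ) (i : ℕ) : ℝ :=
  ⨆ j : {j : Fin n // (j : ℕ) < i}, (pos (j : Fin n)).2

namespace SPInstance

variable {n : ℕ}

/-- The horizontal line at height `t` is proper: it meets no top or
bottom face of a rectangle. -/
def ProperLine (I : SPInstance n) (pos : Fin n → ℝ × ℝ) (t : ℝ) : Prop :=
  ∀ j : Fin n, t ≠ (pos j).2 ∧ t ≠ (pos j).2 + (I.r j).h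

/-- Rectangle `j` intersects the horizontal line at height `t`. -/
def Intersects (I : SPInstance n) (pos : Fin n → ℝ × ℝ) (j : Fin n) (t : ℝ) : Prop :=
  (pos j).2 < t ∧ t < (pos j).2 + (I.r j).h

/-- The occupied part of the horizontal line at height `t`. -/
noncomputable def occupied (I : SPInstance n) (pos : Fin n → ℝ × ℝ) (t : ℝ) : Set ℝ :=
  ⋃ j ∈ {j : Fin n | I.Intersects pos j t}, Set.Icc (pos j).1 ((pos j).1 + (I.r j).w)

/-- The occupied fraction of the horizontal line at height `t`. -/
noncomputable def occFrac (I : SPInstance n) (pos : Fin n → ℝ × ℝ) (t : ℝ) : ℝ :=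
  (volume (I.occupied pos t)).toReal / I.W

/-- The region `H_{i+1}` (for the `0`-based index `i`) of the horizontal strip
partition: `[0, W] × [max {y_{r_1}, …, y_{r_i}}, y_{r_{i+1}})`. -/
def regionH (I : SPInstance n) (pos : Fin n → ℝ × ℝ) (i : Fin n) : Set (ℝ × ℝ) :=
  Set.Icc 0 I.W ×ˢ Set.Ico (maxYBelow pos (i : ℕ)) (pos i).2

/-- `G` is an unoccupied gap of the horizontal line at height `t`: a maximal
subinterval of `[0, W]` disjoint from the occupied part of the line. -/
def IsGap (I : SPInstance n) (pos : Fin n → ℝ × ℝ) (t : ℝ) (G : Set ℝ) : Prop :=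
  G.Nonempty ∧ G ⊆ Set.Icc 0 I.W ∧ G.OrdConnected ∧ Disjoint G (I.occupied pos t) ∧
    ∀ G' : Set ℝ, G'.OrdConnected → G' ⊆ Set.Icc 0 I.W →
      Disjoint G' (I.occupied pos t) → G ⊆ G' → G' = G

/-- `j` is a left supporter of `i`: it comes before `i` in the ordering, its
right face touches the left face of `i`, and their open `y`-ranges intersect. -/
def IsLeftSupporter (I : SPInstance n) (pos : Fin n → ℝ × ℝ) (i j : Fin n) : Prop :=
  j < i ∧ (pos j).1 + (I.r j).w = (pos i).1 ∧
    (pos j).2 < (pos i).2 + (I.r i).h ∧ (pos i).2 < (pos j).2 + (I.r j).h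

/-- `j` is a bottom supporter of `i`: it comes before `i` in the ordering, its
top face touches the bottom face of `i`, and their open `x`-ranges intersect. -/
def IsBottomSupporter (I : SPInstance n) (pos : Fin n → ℝ × ℝ) (i j : Fin n) : Prop :=
  j < i ∧ (pos j).2 + (I.r j).h = (pos i).2 ∧
    (pos j).1 < (pos i).1 + (I.r i).w ∧ (pos i).1 < (pos j).1 + (I.r j).w

/-- `j` is the leftmost bottom supporter of `i`. -/
def IsLeftmostBottomSupporter (I : SPInstance n) (pos : Fin n → ℝ × ℝ)
    (i j : Fin n) : Prop :=
  I.IsBottomSupporter pos i j ∧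
    ∀ j' : Fin n, I.IsBottomSupporter pos i j' → (pos j).1 ≤ (pos j').1

end SPInstance

/-- `iT` is the top rectangle `r_T` of `Q`: the rectangle of `Q` whose top face
is highest, ties broken by highest bottom face. -/
def IsTopRect {n : ℕ} (I : SPInstance n) (d : FQW I) (pos : Fin n → ℝ × ℝ)
    (iT : Fin n) : Prop :=
  iT ∈ d.Q ∧ ∀ j ∈ d.Q,
    (pos j).2 + (I.r j).h < (pos iT).2 + (I.r iT).h ∨
    ((pos j).2 + (I.r j).h = (pos iT).2 + (I.r iT).h ∧ (pos j).2 ≤ (pos iT).2)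

/-- `iL` is the left rectangle `r_L` of `Q`: the first rectangle of `Q` in the
ordering touching the left strip boundary, and `r_T` if there is none. -/
def IsLeftRect {n : ℕ} (I : SPInstance n) (d : FQW I) (pos : Fin n → ℝ × ℝ)
    (iT iL : Fin n) : Prop :=
  (iL ∈ d.Q ∧ (pos iL).1 = 0 ∧ ∀ j ∈ d.Q, (pos j).1 = 0 → iL ≤ j) ∨
  ((∀ j ∈ d.Q, (pos j).1 ≠ 0) ∧ iL = iT)

/-- The region `H' = [0, W] × ([0, h_{r_T}] ∪ [y_{r_T}, y_{r_T} + h_{r_T}])`. -/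
def Hprime {n : ℕ} (I : SPInstance n) (pos : Fin n → ℝ × ℝ) (iT : Fin n) :
    Set (ℝ × ℝ) :=
  Set.Icc 0 I.W ×ˢ
    (Set.Icc 0 (I.r iT).h ∪ Set.Icc (pos iT).2 ((pos iT).2 + (I.r iT).h))

/-- The type `T(ℓ)` of the proper horizontal line at height `t`: the rectangles
of `Q` intersecting the line whose index is smaller than the least index `j`
with `y_{r_j} > t` (equivalently, all rectangles with index at most theirs have
bottom face at height at most `t`). -/
noncomputable def TypeOf {n : ℕ} (I : SPInstance n) (d : FQW I)
    (pos : Fin n → ℝ × ℝ) (t : ℝ) : Finset (Fin n) :=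
  Finset.univ.filter fun i =>
    i ∈ d.Q ∧ I.Intersects pos i t ∧ ∀ j : Fin n, j ≤ i → (pos j).2 ≤ t

/-- `i` is `LM(ℓ)`: the rectangle of `T(ℓ)` with smallest `x`-coordinate. -/
def IsLM {n : ℕ} (I : SPInstance n) (d : FQW I) (pos : Fin n → ℝ × ℝ) (t : ℝ)
    (i : Fin n) : Prop :=
  i ∈ TypeOf I d pos t ∧ ∀ j ∈ TypeOf I d pos t, (pos i).1 ≤ (pos j).1

/-- The horizontal line at height `t` lies in `H_{a+2} ∪ ⋯ ∪ H_L`, where `iL`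
is the `0`-based index of `r_L` (so `L = iL + 1`, `1`-based). -/
def LineInHUnion {n : ℕ} (I : SPInstance n) (d : FQW I) (pos : Fin n → ℝ × ℝ)
    (iL : Fin n) (t : ℝ) : Prop :=
  ∃ m : Fin n, d.F.card + 1 ≤ (m : ℕ) ∧ m ≤ iL ∧
    maxYBelow pos (m : ℕ) ≤ t ∧ t < (pos m).2

/-- The space `H_{a+2} ∪ ⋯ ∪ H_L`, where `iL` is the `0`-based index of `r_L`. -/
def regionHUnion {n : ℕ} (I : SPInstance n) (d : FQW I) (pos : Fin n → ℝ × ℝ)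
    (iL : Fin n) : Set (ℝ × ℝ) :=
  ⋃ m ∈ {m : Fin n | d.F.card + 1 ≤ (m : ℕ) ∧ m ≤ iL}, I.regionH pos m

/-- The horizontal line at height `t` belongs to `L^k`: it is a proper line of
order `k` lying in `H_{a+2} ∪ ⋯ ∪ H_L`. -/
def InLk {n : ℕ} (I : SPInstance n) (d : FQW I) (pos : Fin n → ℝ × ℝ)
    (iL : Fin n) (k : ℕ) (t : ℝ) : Prop :=
  I.ProperLine pos t ∧ LineInHUnion I d pos iL t ∧ (TypeOf I d pos t).card = k

/-- `i` belongs to `R^k`: it is `LM(ℓ)` for some line `ℓ ∈ L^k`. -/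
def InRk {n : ℕ} (I : SPInstance n) (d : FQW I) (pos : Fin n → ℝ × ℝ)
    (iL : Fin n) (k : ℕ) (i : Fin n) : Prop :=
  ∃ t : ℝ, InLk I d pos iL k t ∧ IsLM I d pos t i

/-- `i` is `LM^k`: the rectangle of `R^k` with smallest `x`-coordinate,
ties broken by largest `y`-coordinate. -/
def IsLMk {n : ℕ} (I : SPInstance n) (d : FQW I) (pos : Fin n → ℝ × ℝ)
    (iL : Fin n) (k : ℕ) (i : Fin n) : Prop :=
  InRk I d pos iL k i ∧ ∀ j : Fin n, InRk I d pos iL k j →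
    (pos i).1 < (pos j).1 ∨ ((pos i).1 = (pos j).1 ∧ (pos j).2 ≤ (pos i).2)

/-- `v = x_F^ℓ` for the line `ℓ` at height `t`: the right face `x + w` of the
rightmost rectangle of `F` intersecting `ℓ`, and `0` if there is none. -/
def IsXF {n : ℕ} (I : SPInstance n) (d : FQW I) (pos : Fin n → ℝ × ℝ)
    (t v : ℝ) : Prop :=
  ((∃ f ∈ d.F, I.Intersects pos f t ∧ v = (pos f).1 + (I.r f).w) ∧
    ∀ f ∈ d.F, I.Intersects pos f t → (pos f).1 + (I.r f).w ≤ v) ∨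
  ((∀ f ∈ d.F, ¬ I.Intersects pos f t) ∧ v = 0)

section Auxiliary

variable {n : ℕ}

lemma mem_openBox {R : Rect} {p q : ℝ × ℝ} :
    q ∈ openBox R p ↔ (p.1 < q.1 ∧ q.1 < p.1 + R.w) ∧ (p.2 < q.2 ∧ q.2 < p.2 + R.h) := by
  simp [openBox, Set.mem_prod, Set.mem_Ioo, and_assoc]

lemma openBox_disjoint_of_y {R1 R2 : Rect} {p1 p2 : ℝ × ℝ} (h : p1.2 + R1.h ≤ p2.2) :
    Disjoint (openBox R1 p1) (openBox R2 p2) := by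
  rw [Set.disjoint_left]
  intro q hq1 hq2
  rw [mem_openBox] at hq1 hq2
  linarith [hq1.2.2, hq2.2.1]

lemma openBox_disjoint_of_x {R1 R2 : Rect} {p1 p2 : ℝ × ℝ} (h : p1.1 + R1.w ≤ p2.1) :
    Disjoint (openBox R1 p1) (openBox R2 p2) := by
  rw [Set.disjoint_left]
  intro q hq1 hq2
  rw [mem_openBox] at hq1 hq2
  linarith [hq1.1.2, hq2.1.1]

namespace SPInstance

lemma feasible_of_isBL (I : SPInstance n) {pos : Fin n → ℝ × ℝ} (hBL : I.IsBL pos) :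
    I.Feasible pos := by
  refine ⟨fun i => ((hBL i).1).1, ?_⟩
  intro i j hij
  rcases lt_or_gt_of_ne hij with h | h
  · exact (((hBL j).1).2 i h).symm
  · exact ((hBL i).1).2 j h

lemma h_le_hmax (I : SPInstance n) (i : Fin n) : (I.r i).h ≤ I.hmax :=
  le_ciSup (f := fun j => (I.r j).h) (Set.Finite.bddAbove (Set.finite_range _)) i

lemma hmax_nonneg (I : SPInstance n) : 0 ≤ I.hmax := by
  cases isEmpty_or_nonempty (Fin n) with
  | inl h => simp [SPInstance.hmax, Real.iSup_of_isEmpty]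
  | inr h =>
    obtain ⟨i⟩ := h
    exact le_trans (I.h_pos i).le (I.h_le_hmax i)

lemma le_height (I : SPInstance n) (pos : Fin n → ℝ × ℝ) (i : Fin n) :
    (pos i).2 + (I.r i).h ≤ I.height pos :=
  le_ciSup (f := fun j => (pos j).2 + (I.r j).h) (Set.Finite.bddAbove (Set.finite_range _)) i

lemma hmax_le_height (I : SPInstance n) {pos : Fin n → ℝ × ℝ} (hf : I.Feasible pos) :
    I.hmax ≤ I.height pos := by
  cases isEmpty_or_nonempty (Fin n) with
  | inl h => simp [SPInstance.hmax, SPInstance.height, Real.iSup_of_isEmpty]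
  | inr h =>
    apply ciSup_le
    intro i
    have h0 : 0 ≤ (pos i).2 := (hf.1 i).2.2
    have := I.le_height pos i
    linarith

lemma sum_greedyF_le (I : SPInstance n) (σ : Equiv.Perm (Fin n)) :
    ∑ f ∈ I.greedyF σ, (I.r f).w ≤ I.W := by
  have key : ∀ (l : List (Fin n)) (F0 : Finset (Fin n)), ∑ f ∈ F0, (I.r f).w ≤ I.W →
      ∑ f ∈ l.foldl
        (fun F k => if (I.r (σ k)).w + ∑ f ∈ F, (I.r f).w ≤ I.W then insert (σ k) F else F)
        F0, (I.r f).w ≤ I.W := by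
    intro l
    induction l with
    | nil => intro F0 h; simpa using h
    | cons a t ih =>
      intro F0 h
      simp only [List.foldl_cons]
      apply ih
      split_ifs with hc
      · by_cases hm : σ a ∈ F0
        · rwa [Finset.insert_eq_self.mpr hm]
        · rw [Finset.sum_insert hm]; linarith
      · exact h
  exact key _ _ (by simpa using I.W_pos.le)

/-- Prefix sums of widths. -/
noncomputable def Spre (I : SPInstance n) (k : ℕ) : ℝ :=
  ∑ j ∈ Finset.univ.filter (fun j : Fin n => (j : ℕ) < k), (I.r j).w

lemma Spre_nonneg (I : SPInstance n) (k : ℕ) : 0 ≤ I.Spre k :=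
  Finset.sum_nonneg fun j _ => (I.w_pos j).le

lemma Spre_mono (I : SPInstance n) {k m : ℕ} (h : k ≤ m) : I.Spre k ≤ I.Spre m := by
  apply Finset.sum_le_sum_of_subset_of_nonneg
  · intro j hj
    simp only [Finset.mem_filter, Finset.mem_univ, true_and] at hj ⊢
    omega
  · exact fun j _ _ => (I.w_pos j).le

lemma Spre_succ (I : SPInstance n) {k : ℕ} (hk : k < n) :
    I.Spre (k + 1) = I.Spre k + (I.r ⟨k, hk⟩).w := by
  unfold Spre
  have hins : Finset.univ.filter (fun j : Fin n => (j : ℕ) < k + 1)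
      = insert (⟨k, hk⟩ : Fin n) (Finset.univ.filter fun j : Fin n => (j : ℕ) < k) := by
    ext j
    simp only [Finset.mem_filter, Finset.mem_univ, true_and, Finset.mem_insert, Fin.ext_iff]
    omega
  rw [hins, Finset.sum_insert (by simp)]
  ring

end SPInstance

end Auxiliary
section PosF

variable {n : ℕ}

lemma FQW.filter_lt_card_eq_F {I : SPInstance n} (d : FQW I) (hord : d.IsOrdered) :
    Finset.univ.filter (fun j : Fin n => (j : ℕ) < d.F.card) = d.F := by
  ext j
  simp only [Finset.mem_filter, Finset.mem_univ, true_and]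
  exact (hord.1 j).symm

lemma FQW.card_F_le {I : SPInstance n} (d : FQW I) : d.F.card ≤ n := by
  simpa using Finset.card_le_card (Finset.subset_univ d.F)

lemma FQW.Spre_card_le_W {I : SPInstance n} (d : FQW I) (hord : d.IsOrdered) :
    I.Spre d.F.card ≤ I.W := by
  rw [SPInstance.Spre, d.filter_lt_card_eq_F hord]
  exact I.sum_greedyF_le d.σ

lemma pos_of_mem_F {I : SPInstance n} (d : FQW I) (hord : d.IsOrdered)
    {pos : Fin n → ℝ × ℝ} (hBL : I.IsBL pos) :
    ∀ i : Fin n, (i : ℕ) < d.F.card → pos i = (I.Spre (i : ℕ), 0) := by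
  suffices H : ∀ m : ℕ, ∀ i : Fin n, (i : ℕ) < m → (i : ℕ) < d.F.card → pos i = (I.Spre (i : ℕ), 0) by
    exact fun i => H ((i : ℕ) + 1) i (Nat.lt_succ_self _)
  intro m
  induction m with
  | zero => exact fun i h => absurd h (by omega)
  | succ m ihm =>
    intro i him hia
    have IH : ∀ j : Fin n, j < i → (j : ℕ) < d.F.card → pos j = (I.Spre (j : ℕ), 0) := by
      intro j hj hja
      have hj' := Fin.lt_def.mp hj
      exact ihm j (by omega) hja
    -- feasibility of the candidate position
    have hSiW : I.Spre ((i : ℕ) + 1) ≤ I.W :=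
      le_trans (I.Spre_mono hia) (d.Spre_card_le_W hord)
    have hSsucc : I.Spre ((i : ℕ) + 1) = I.Spre (i : ℕ) + (I.r i).w := by
      rw [I.Spre_succ i.isLt]
    have hfeas : I.FeasibleAt pos i (I.Spre (i : ℕ), 0) := by
      refine ⟨⟨I.Spre_nonneg _, by rw [← hSsucc] at *; simpa using hSiW, le_refl 0⟩, ?_⟩
      intro j hj
      have hja : (j : ℕ) < d.F.card := lt_trans (Fin.lt_def.mp hj) hia
      have hpj : pos j = (I.Spre (j : ℕ), 0) := IH j hj hja
      refine (openBox_disjoint_of_x ?_).symm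
      rw [hpj]
      show I.Spre (j : ℕ) + (I.r j).w ≤ I.Spre (i : ℕ)
      rw [← I.Spre_succ j.isLt]
      exact I.Spre_mono (Fin.lt_def.mp hj)
    have hmin := (hBL i).2 _ hfeas
    have hy0 : 0 ≤ (pos i).2 := ((hBL i).1).1.2.2
    have hy : (pos i).2 = 0 := by
      rcases hmin with h | h
      · exfalso; simp only at h; linarith
      · exact h.1
    have hxle : (pos i).1 ≤ I.Spre (i : ℕ) := by
      rcases hmin with h | h
      · exfalso; simp only at h; linarith
      · exact h.2
    have hx0 : 0 ≤ (pos i).1 := ((hBL i).1).1.1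
    -- now show the x coordinate is exactly Spre i
    by_cases hxeq : (pos i).1 = I.Spre (i : ℕ)
    · exact Prod.ext hxeq hy
    exfalso
    have hxlt : (pos i).1 < I.Spre (i : ℕ) := lt_of_le_of_ne hxle hxeq
    set x := (pos i).1 with hxdef
    -- largest k ≤ i with Spre k ≤ x
    set P : ℕ → Prop := fun k => I.Spre k ≤ x with hP
    have hP0 : P 0 := by
      show I.Spre 0 ≤ x
      have : I.Spre 0 = 0 := by simp [SPInstance.Spre]
      rw [this]; exact hx0
    classical
    set k : ℕ := Nat.findGreatest P (i : ℕ) with hk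
    have hkP : P k := Nat.findGreatest_spec (Nat.zero_le _) hP0
    have hkle : k ≤ (i : ℕ) := Nat.findGreatest_le _
    have hklt : k < (i : ℕ) := by
      rcases lt_or_eq_of_le hkle with h | h
      · exact h
      · exfalso; rw [h] at hkP; exact absurd hkP (not_le.mpr hxlt)
    have hknext : ¬ P (k + 1) :=
      Nat.findGreatest_is_greatest (Nat.lt_succ_self k) (by omega)
    have hknext' : x < I.Spre (k + 1) := not_le.mp hknext
    have hkn : k < n := lt_trans hklt i.isLt
    set j : Fin n := ⟨k, hkn⟩ with hj
    have hji : j < i := by rw [Fin.lt_def]; exact hklt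
    have hja : (j : ℕ) < d.F.card := lt_trans hklt hia
    have hpj : pos j = (I.Spre k, 0) := IH j hji hja
    have hSk1 : I.Spre (k + 1) = I.Spre k + (I.r j).w := I.Spre_succ hkn
    -- build the common point
    set u : ℝ := min (x + (I.r i).w) (I.Spre k + (I.r j).w) with hu
    have hxu : x < u := by
      apply lt_min
      · linarith [I.w_pos i]
      · rw [← hSk1]; exact hknext'
    set t : ℝ := (x + u) / 2 with ht
    set s : ℝ := min (I.r i).h (I.r j).h / 2 with hs
    have hdisj := ((hBL i).1).2 j hji
    rw [Set.disjoint_left] at hdisj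
    apply hdisj (a := (t, s)) <;> rw [mem_openBox]
    · constructor
      · constructor
        · show x < t; simp only [ht]; linarith
        · show t < x + (I.r i).w
          have : u ≤ x + (I.r i).w := min_le_left _ _
          simp only [ht]; linarith
      · rw [hy]
        constructor
        · show (0:ℝ) < s
          simp only [hs]
          have := I.h_pos i; have := I.h_pos j
          rcases min_cases (I.r i).h (I.r j).h with ⟨h1, _⟩ | ⟨h1, _⟩ <;> rw [h1] <;> linarith
        · show s < 0 + (I.r i).h
          have : min (I.r i).h (I.r j).h ≤ (I.r i).h := min_le_left _ _
          have := I.h_pos i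
          simp only [hs]; linarith
    · rw [hpj]
      constructor
      · constructor
        · show I.Spre k < t
          simp only [ht]; linarith [hkP]
        · show t < I.Spre k + (I.r j).w
          have : u ≤ I.Spre k + (I.r j).w := min_le_right _ _
          simp only [ht]; linarith
      · constructor
        · show (0:ℝ) < s
          simp only [hs]
          have := I.h_pos i; have := I.h_pos j
          rcases min_cases (I.r i).h (I.r j).h with ⟨h1, _⟩ | ⟨h1, _⟩ <;> rw [h1] <;> linarith
        · show s < 0 + (I.r j).h
          have : min (I.r i).h (I.r j).h ≤ (I.r j).h := min_le_right _ _
          have := I.h_pos j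
          simp only [hs]; linarith

end PosF
section WSum

variable {n : ℕ}

lemma height_nonneg_of_pos {I : SPInstance n} {pos : Fin n → ℝ × ℝ} (hn : 0 < n)
    (hf : I.Feasible pos) : 0 ≤ I.height pos := by
  have i0 : Fin n := ⟨0, hn⟩
  have h0 : 0 ≤ (pos i0).2 := (hf.1 i0).2.2
  have := I.le_height pos i0
  have := I.h_pos i0
  linarith

lemma sum_Wset_le_height {I : SPInstance n} (d : FQW I) (hn : 0 < n)
    {pos : Fin n → ℝ × ℝ} (hf : I.Feasible pos) :
    ∑ i ∈ d.Wset, (I.r i).h ≤ I.height pos := by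
  have hH0 : 0 ≤ I.height pos := height_nonneg_of_pos hn hf
  have hwide : ∀ i ∈ d.Wset, I.W / 2 < (I.r i).w := by
    intro i hi
    simp only [FQW.Wset, Finset.mem_filter, Finset.mem_univ, true_and] at hi
    exact hi.2
  have hmid : ∀ i ∈ d.Wset, (pos i).1 < I.W / 2 ∧ I.W / 2 < (pos i).1 + (I.r i).w := by
    intro i hi
    have h1 : 0 ≤ (pos i).1 := (hf.1 i).1
    have h2 : (pos i).1 + (I.r i).w ≤ I.W := (hf.1 i).2.1
    have h3 := hwide i hi
    constructor <;> linarith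
  have hpair : (↑d.Wset : Set (Fin n)).PairwiseDisjoint
      (fun i => Set.Ioo (pos i).2 ((pos i).2 + (I.r i).h)) := by
    intro i hi j hj hij
    simp only [Finset.coe_sort_coe, Finset.mem_coe] at hi hj
    simp only [Function.onFun]
    rw [Set.disjoint_left]
    intro y hyi hyj
    have hdisj : Disjoint (openBox (I.r i) (pos i)) (openBox (I.r j) (pos j)) := hf.2 hij
    rw [Set.disjoint_left] at hdisj
    apply hdisj (a := (I.W / 2, y)) <;> rw [mem_openBox]
    · exact ⟨⟨(hmid i hi).1, (hmid i hi).2⟩, hyi.1, hyi.2⟩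
    · exact ⟨⟨(hmid j hj).1, (hmid j hj).2⟩, hyj.1, hyj.2⟩
  have hsub : (⋃ i ∈ d.Wset, Set.Ioo (pos i).2 ((pos i).2 + (I.r i).h))
      ⊆ Set.Icc 0 (I.height pos) := by
    intro y hy
    simp only [Set.mem_iUnion, Set.mem_Ioo, exists_prop] at hy
    obtain ⟨i, _, h1, h2⟩ := hy
    have h3 : 0 ≤ (pos i).2 := (hf.1 i).2.2
    have h4 := I.le_height pos i
    exact ⟨by linarith, by linarith⟩
  have h1 : ∑ i ∈ d.Wset, ENNReal.ofReal (I.r i).h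
      = volume (⋃ i ∈ d.Wset, Set.Ioo (pos i).2 ((pos i).2 + (I.r i).h)) := by
    rw [measure_biUnion_finset hpair (fun i _ => measurableSet_Ioo)]
    refine Finset.sum_congr rfl fun i _ => ?_
    rw [Real.volume_Ioo]
    congr 1
    ring
  have h2 : volume (⋃ i ∈ d.Wset, Set.Ioo (pos i).2 ((pos i).2 + (I.r i).h))
      ≤ ENNReal.ofReal (I.height pos) := by
    calc _ ≤ volume (Set.Icc 0 (I.height pos)) := measure_mono hsub
    _ = ENNReal.ofReal (I.height pos - 0) := Real.volume_Icc
    _ = ENNReal.ofReal (I.height pos) := by rw [sub_zero]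
  have h3 : ENNReal.ofReal (∑ i ∈ d.Wset, (I.r i).h) ≤ ENNReal.ofReal (I.height pos) := by
    rw [ENNReal.ofReal_sum_of_nonneg (fun i _ => (I.h_pos i).le)]
    rw [h1]; exact h2
  exact (ENNReal.ofReal_le_ofReal_iff hH0).mp h3

lemma le_hOPT {I : SPInstance n} {c : ℝ} {pos0 : Fin n → ℝ × ℝ} (hf0 : I.Feasible pos0)
    (hc : ∀ pos : Fin n → ℝ × ℝ, I.Feasible pos → c ≤ I.height pos) : c ≤ I.hOPT := by
  rw [SPInstance.hOPT]
  refine le_csInf ⟨I.height pos0, ⟨pos0, hf0, rfl⟩⟩ ?_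
  rintro H ⟨pos, hfe, rfl⟩
  exact hc pos hfe

end WSum

/-- **Lemma.** If `Q = ∅`, or the highest top face of a rectangle of `Q` in the
BL packing is at height at most `h_max`, then the BL packing of the
FQW-ordered instance has height at most `2 · h_OPT`. -/
theorem bl_fqw_two_approx_of_low_Q {n : ℕ} (I : SPInstance n) (d : FQW I)
    (hord : d.IsOrdered) (pos : Fin n → ℝ × ℝ) (hBL : I.IsBL pos)
    (hcond : d.Q = ∅ ∨ ∀ i ∈ d.Q, (pos i).2 + (I.r i).h ≤ I.hmax) :
    I.height pos ≤ 2 * I.hOPT := by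
  classical
  have hfeas : I.Feasible pos := I.feasible_of_isBL hBL
  rcases Nat.eq_zero_or_pos n with hn | hn
  · subst hn
    have h1 : I.height pos = 0 := by
      unfold SPInstance.height
      exact Real.iSup_of_isEmpty _
    have h2 : (0 : ℝ) ≤ I.hOPT := by
      refine le_hOPT hfeas fun p hp => ?_
      unfold SPInstance.height
      rw [Real.iSup_of_isEmpty]
    rw [h1]; linarith
  haveI : Nonempty (Fin n) := ⟨⟨0, hn⟩⟩
  have hQtop : ∀ i ∈ d.Q, (pos i).2 + (I.r i).h ≤ I.hmax := by
    rcases hcond with h | h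
    · intro i hi; rw [h] at hi; exact absurd hi (Finset.notMem_empty i)
    · exact h
  have hsum_nonneg : ∀ s : Finset (Fin n), 0 ≤ ∑ k ∈ s, (I.r k).h :=
    fun s => Finset.sum_nonneg fun k _ => (I.h_pos k).le
  -- main claim: every top face is at height at most hmax + (total height of 𝒲 up to i)
  have claim : ∀ m : ℕ, ∀ i : Fin n, (i : ℕ) < m →
      (pos i).2 + (I.r i).h ≤ I.hmax + ∑ k ∈ d.Wset.filter (fun k => k ≤ i), (I.r k).h := by
    intro m
    induction m with
    | zero => exact fun i h => absurd h (by omega)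
    | succ m ihm =>
      intro i him
      have IH : ∀ j : Fin n, j < i →
          (pos j).2 + (I.r j).h ≤ I.hmax + ∑ k ∈ d.Wset.filter (fun k => k ≤ j), (I.r k).h := by
        intro j hj
        have := Fin.lt_def.mp hj
        exact ihm j (by omega)
      rcases lt_or_ge (i : ℕ) d.F.card with hF | hF
      · -- i ∈ F : it is placed at the bottom
        have hp := pos_of_mem_F d hord hBL i hF
        have hy : (pos i).2 = 0 := by rw [hp]
        rw [hy]
        have := I.h_le_hmax i
        have := hsum_nonneg (d.Wset.filter (fun k => k ≤ i))
        linarith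
      · rcases lt_or_ge (i : ℕ) (d.F.card + d.Q.card) with hQ2 | hW
        · -- i ∈ Q : use the hypothesis
          have hiQ : i ∈ d.Q := (hord.2.1 i).mpr ⟨hF, hQ2⟩
          have := hQtop i hiQ
          have := hsum_nonneg (d.Wset.filter (fun k => k ≤ i))
          linarith
        · -- i ∈ 𝒲 : BL can always place it on top of everything placed so far
          have hiF : i ∉ d.F := by rw [hord.1 i]; omega
          have hiQ : i ∉ d.Q := by rw [hord.2.1 i]; omega
          have hiW : i ∈ d.Wset := by
            simp only [FQW.Wset, Finset.mem_filter, Finset.mem_univ, true_and]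
            refine ⟨hiF, ?_⟩
            by_contra hw
            exact hiQ (by
              simp only [FQW.Q, Finset.mem_filter, Finset.mem_univ, true_and]
              exact ⟨hiF, hw⟩)
          set M : ℝ := I.hmax + ∑ k ∈ d.Wset.filter (fun k => k < i), (I.r k).h with hM
          have hM0 : 0 ≤ M := by
            have := I.hmax_nonneg
            have := hsum_nonneg (d.Wset.filter (fun k => k < i))
            simp only [hM]; linarith
          have hfeasM : I.FeasibleAt pos i (0, M) := by
            refine ⟨⟨le_refl 0, by simpa using I.w_le_W i, hM0⟩, ?_⟩
            intro j hj
            refine (openBox_disjoint_of_y ?_).symm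
            show (pos j).2 + (I.r j).h ≤ M
            refine le_trans (IH j hj) ?_
            simp only [hM]
            apply add_le_add_right
            apply Finset.sum_le_sum_of_subset_of_nonneg
            · intro k hk
              simp only [Finset.mem_filter] at hk ⊢
              exact ⟨hk.1, lt_of_le_of_lt hk.2 hj⟩
            · exact fun k _ _ => (I.h_pos k).le
          have hyM : (pos i).2 ≤ M := by
            rcases (hBL i).2 _ hfeasM with h | h
            · exact le_of_lt h
            · exact le_of_eq h.1
          have hsplit : d.Wset.filter (fun k => k ≤ i)
              = insert i (d.Wset.filter (fun k => k < i)) := by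
            ext k
            simp only [Finset.mem_filter, Finset.mem_insert]
            constructor
            · rintro ⟨hk1, hk2⟩
              rcases eq_or_lt_of_le hk2 with h | h
              · exact Or.inl h
              · exact Or.inr ⟨hk1, h⟩
            · rintro (rfl | ⟨hk1, hk2⟩)
              · exact ⟨hiW, le_refl _⟩
              · exact ⟨hk1, le_of_lt hk2⟩
          rw [hsplit, Finset.sum_insert (by simp)]
          linarith
  -- conclude
  have htop : ∀ i : Fin n, (pos i).2 + (I.r i).h ≤ I.hmax + ∑ k ∈ d.Wset, (I.r k).h := by
    intro i
    refine le_trans (claim ((i : ℕ) + 1) i (Nat.lt_succ_self _)) ?_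
    apply add_le_add_right
    exact Finset.sum_le_sum_of_subset_of_nonneg (Finset.filter_subset _ _)
      fun k _ _ => (I.h_pos k).le
  have hheight : I.height pos ≤ I.hmax + ∑ k ∈ d.Wset, (I.r k).h := by
    unfold SPInstance.height
    exact ciSup_le htop
  have h1 : I.hmax ≤ I.hOPT := le_hOPT hfeas fun p hp => I.hmax_le_height hp
  have h2 : ∑ k ∈ d.Wset, (I.r k).h ≤ I.hOPT :=
    le_hOPT hfeas fun p hp => sum_Wset_le_height d hn hp
  linarith
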